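/- Let 𝒪 be an order ideal in P = K[x_0,…,x_n], fix a labeling of ∂𝒪 ordered increasingly by degree, and let G be a homogeneous ∂𝒪-prebasis. If f ∈ ⟨𝒯G⟩ is nonzero, then there exist finitely many border terms σ_{i_1},…,σ_{i_r} ∈ ∂𝒪 with deg(σ_{i_j}) ≤ deg(f) and polynomials q_1,…,q_r ∈ P such that f = q_1·g_{σ_{i_1}} + ⋯ + q_r·g_{σ_{i_r}} and deg(q_j) ≤ ind_𝒪(f) − 1 whenever q_j ≠ 0. -/

import Mathlib

open MvPolynomial

namespace Border

/-- A term of `K[x_0, …, x_n]`, identified with its exponent vector. -/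
abbrev Term (n : ℕ) := Fin (n + 1) →₀ ℕ

variable {n : ℕ}

/-- The (standard) degree of a term. -/
def tdeg (m : Term n) : ℕ := ∑ i, m i

/-- An order ideal: a nonempty set of terms closed under divisors. -/
def IsOrderIdeal (O : Set (Term n)) : Prop :=
  O.Nonempty ∧ ∀ τ ∈ O, ∀ τ' : Term n, τ' ≤ τ → τ' ∈ O

/-- The border `∂𝒪 = (x_0·𝒪 ∪ ⋯ ∪ x_n·𝒪) ∖ 𝒪`. -/
def border (O : Set (Term n)) : Set (Term n) :=
  {σ | σ ∉ O ∧ ∃ r : Fin (n + 1), ∃ τ ∈ O, σ = τ + Finsupp.single r 1}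

/-- Multiplicative set of a border term `σ`, with respect to a labeling `lab` of the border:
`𝒯_σ = {η : σ' ∤ η·σ for every border term σ' with a larger label}`. -/
def mulSet (O : Set (Term n)) (lab : Term n → ℕ) (σ : Term n) : Set (Term n) :=
  {η | ∀ σ' ∈ border O, lab σ < lab σ' → ¬ σ' ≤ η + σ}

/-- The cone `C(σ) = {η·σ : η ∈ 𝒯_σ}`. -/
def cone (O : Set (Term n)) (lab : Term n → ℕ) (σ : Term n) : Set (Term n) :=
  (fun η => η + σ) '' mulSet O lab σ

/-- A labeling of the border which is injective and ordered increasingly by degree. -/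
def DegOrderedLabeling (O : Set (Term n)) (lab : Term n → ℕ) : Prop :=
  Set.InjOn lab (border O) ∧
    ∀ σ ∈ border O, ∀ σ' ∈ border O, lab σ < lab σ' → tdeg σ ≤ tdeg σ'

/-- Iterated border closures: `∂⁰𝒪 := 𝒪`, and the `(k+1)`-st closure adds the border. -/
def borderClosure (O : Set (Term n)) : ℕ → Set (Term n)
  | 0 => O
  | k + 1 => borderClosure O k ∪ border (borderClosure O k)

/-- The index `ind_𝒪(τ)`: the least `k` with `τ ∈ ∂^k𝒪`. -/
noncomputable def ind (O : Set (Term n)) (τ : Term n) : ℕ :=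
  sInf {k | τ ∈ borderClosure O k}

/-- Degree-`d` part of a set of terms. -/
def Od (O : Set (Term n)) (d : ℕ) : Set (Term n) := {τ | τ ∈ O ∧ tdeg τ = d}

variable {K : Type*} [Field K]

/-- The index of a nonzero polynomial: the maximal index of a term of its support. -/
noncomputable def indP (O : Set (Term n)) (f : MvPolynomial (Fin (n + 1)) K) : ℕ :=
  f.support.sup (ind O)

/-- A homogeneous `∂𝒪`-prebasis: a family `g σ = σ - Σ_{τ ∈ 𝒪_{deg σ}} c_{στ} τ`. -/
def IsPrebasis (O : Set (Term n)) (g : Term n → MvPolynomial (Fin (n + 1)) K) : Prop :=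
  ∀ σ ∈ border O, ∀ τ ∈ (monomial σ (1 : K) - g σ).support, τ ∈ O ∧ tdeg τ = tdeg σ

/-- The set of border reductors `𝒯G = {η·g_σ : σ ∈ ∂𝒪, η ∈ 𝒯_σ}`. -/
def reductors (O : Set (Term n)) (lab : Term n → ℕ)
    (g : Term n → MvPolynomial (Fin (n + 1)) K) : Set (MvPolynomial (Fin (n + 1)) K) :=
  {p | ∃ σ ∈ border O, ∃ η ∈ mulSet O lab σ, p = monomial η (1 : K) * g σ}

/-- The degree-`d` border reductors `𝒯G_d = 𝒯G ∩ P_d`. -/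
def reductorsDeg (O : Set (Term n)) (lab : Term n → ℕ)
    (g : Term n → MvPolynomial (Fin (n + 1)) K) (d : ℕ) :
    Set (MvPolynomial (Fin (n + 1)) K) :=
  reductors O lab g ∩ {p | p.IsHomogeneous d}

/-- One step of the border reduction relation `→_G`. -/
def Step (O : Set (Term n)) (lab : Term n → ℕ)
    (g : Term n → MvPolynomial (Fin (n + 1)) K)
    (f h : MvPolynomial (Fin (n + 1)) K) : Prop :=
  ∃ σ ∈ border O, ∃ η ∈ mulSet O lab σ, η + σ ∈ f.support ∧
    h = f - f.coeff (η + σ) • (monomial η (1 : K) * g σ)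

/-- The border reduction relation `→⁺_G` (finitely many, possibly zero, steps). -/
def Reduces (O : Set (Term n)) (lab : Term n → ℕ)
    (g : Term n → MvPolynomial (Fin (n + 1)) K) :
    MvPolynomial (Fin (n + 1)) K → MvPolynomial (Fin (n + 1)) K → Prop :=
  Relation.ReflTransGen (Step O lab g)

/-- The `K`-vector space spanned by a set of terms. -/
noncomputable def spanTerms (K : Type*) [Field K] (S : Set (Term n)) :
    Submodule K (MvPolynomial (Fin (n + 1)) K) :=
  Submodule.span K ((fun τ => monomial τ (1 : K)) '' S)

/-- The ideal `(G)` generated by a `∂𝒪`-prebasis. -/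
noncomputable def idealG (O : Set (Term n)) (g : Term n → MvPolynomial (Fin (n + 1)) K) :
    Ideal (MvPolynomial (Fin (n + 1)) K) :=
  Ideal.span (g '' border O)

/-- The degree-`d` part `I_d` of an ideal, as a `K`-vector subspace. -/
noncomputable def degPart (I : Ideal (MvPolynomial (Fin (n + 1)) K)) (d : ℕ) :
    Submodule K (MvPolynomial (Fin (n + 1)) K) :=
  Submodule.restrictScalars K I ⊓ homogeneousSubmodule (Fin (n + 1)) K d

/-- Homogeneous ideal. -/
def IsHomogeneousIdeal (I : Ideal (MvPolynomial (Fin (n + 1)) K)) : Prop :=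
  ∀ f ∈ I, ∀ d : ℕ, homogeneousComponent d f ∈ I

/-- `G` is a homogeneous `∂𝒪`-basis of `J`: it is a prebasis contained in `J` and for every
`d` one has `P_d = J_d ⊕ ⟨𝒪_d⟩`, i.e. the residue classes of `𝒪_d` are a basis of `P_d/J_d`. -/
def IsBorderBasisOf (O : Set (Term n)) (g : Term n → MvPolynomial (Fin (n + 1)) K)
    (J : Ideal (MvPolynomial (Fin (n + 1)) K)) : Prop :=
  IsPrebasis O g ∧ (∀ σ ∈ border O, g σ ∈ J) ∧
    ∀ d : ℕ, degPart J d ⊔ spanTerms K (Od O d) = homogeneousSubmodule (Fin (n + 1)) K d ∧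
      Disjoint (degPart J d) (spanTerms K (Od O d))

/-- An `m`-lower representation of `f` by `𝒯G`: `f = Σ c_j • η_j·g_{σ_j}` with distinct
pairs `(η_j, σ_j)`, `η_j ∈ 𝒯_{σ_j}` and `ind(η_j σ_j) ≤ m`. -/
def HasLRep (O : Set (Term n)) (lab : Term n → ℕ)
    (g : Term n → MvPolynomial (Fin (n + 1)) K)
    (f : MvPolynomial (Fin (n + 1)) K) (m : ℕ) : Prop :=
  ∃ (s : Finset (Term n × Term n)) (c : Term n × Term n → K),
    (∀ p ∈ s, p.2 ∈ border O ∧ p.1 ∈ mulSet O lab p.2 ∧ ind O (p.1 + p.2) ≤ m) ∧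
    f = ∑ p ∈ s, c p • (monomial p.1 (1 : K) * g p.2)

/-- An `m`-lower representation of `f` by `𝒯G_d`. -/
def HasLRepDeg (O : Set (Term n)) (lab : Term n → ℕ)
    (g : Term n → MvPolynomial (Fin (n + 1)) K)
    (f : MvPolynomial (Fin (n + 1)) K) (m d : ℕ) : Prop :=
  ∃ (s : Finset (Term n × Term n)) (c : Term n × Term n → K),
    (∀ p ∈ s, p.2 ∈ border O ∧ p.1 ∈ mulSet O lab p.2 ∧ ind O (p.1 + p.2) ≤ m ∧
      (monomial p.1 (1 : K) * g p.2).IsHomogeneous d) ∧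
    f = ∑ p ∈ s, c p • (monomial p.1 (1 : K) * g p.2)

/-- The subtype of terms of `𝒪` of degree `d`. -/
abbrev OdSub (O : Set (Term n)) (d : ℕ) : Type _ := {τ : Term n // τ ∈ Od O d}

lemma tdeg_component_lt {d : ℕ} (m : Term n) (h : tdeg m = d) (i : Fin (n + 1)) :
    m i < d + 1 := by
  have : m i ≤ tdeg m :=
    Finset.single_le_sum (f := fun j => m j) (fun j _ => Nat.zero_le _) (Finset.mem_univ i)
  omega

instance (O : Set (Term n)) (d : ℕ) : Finite (OdSub O d) := by
  have hinj : Function.Injective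
      (fun τ : OdSub O d => fun i : Fin (n + 1) =>
        (⟨τ.1 i, tdeg_component_lt τ.1 τ.2.2 i⟩ : Fin (d + 1))) := by
    intro a b hab
    apply Subtype.ext
    apply Finsupp.ext
    intro i
    simpa using congrArg Fin.val (congrFun hab i)
  exact Finite.of_injective _ hinj

noncomputable instance (O : Set (Term n)) (d : ℕ) : Fintype (OdSub O d) :=
  Fintype.ofFinite _

open scoped Classical in
/-- The `r`-th `d`-graded formal multiplication matrix of a prebasis `G`,
with rows indexed by `𝒪_{d+1}` and columns by `𝒪_d`. -/
noncomputable def multMatrix (O : Set (Term n))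
    (g : Term n → MvPolynomial (Fin (n + 1)) K) (r : Fin (n + 1)) (d : ℕ) :
    Matrix (OdSub O (d + 1)) (OdSub O d) K :=
  Matrix.of fun τ' τ =>
    if τ.1 + Finsupp.single r 1 ∈ O then
      (if τ.1 + Finsupp.single r 1 = τ'.1 then 1 else 0)
    else (monomial (τ.1 + Finsupp.single r 1) (1 : K)
            - g (τ.1 + Finsupp.single r 1)).coeff τ'.1

/-- The minimum degree of a border term. -/
noncomputable def minDegBorder (O : Set (Term n)) : ℕ := sInf (tdeg '' border O)

/-- The `d`-th Macaulay transformation `a^{⟨d⟩}`, computed greedily. -/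
noncomputable def macaulay : ℕ → ℕ → ℕ
  | 0, _ => 0
  | d + 1, a =>
    if a = 0 then 0
    else
      Nat.choose (sSup {k | Nat.choose k (d + 1) ≤ a} + 1) (d + 2) +
        macaulay d (a - Nat.choose (sSup {k | Nat.choose k (d + 1) ≤ a}) (d + 1))

/-- An ideal is generated in degrees `≤ m` if it is generated by its homogeneous
elements of degree `≤ m`. -/
def GeneratedInDegLE (I : Ideal (MvPolynomial (Fin (n + 1)) K)) (m : ℕ) : Prop :=
  I = Ideal.span {f | f ∈ I ∧ ∃ d ≤ m, f.IsHomogeneous d}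

section Aux

variable {O : Set (Term n)}

lemma tdeg_add (a b : Term n) : tdeg (a + b) = tdeg a + tdeg b := by
  simp [tdeg, Finsupp.add_apply, Finset.sum_add_distrib]

lemma tdeg_single (r : Fin (n + 1)) : tdeg (Finsupp.single r 1 : Term n) = 1 := by
  simp [tdeg, Finsupp.single_apply]

lemma tdeg_eq_zero {a : Term n} (h : tdeg a = 0) : a = 0 := by
  ext i
  have := Finset.sum_eq_zero_iff.mp h i (Finset.mem_univ i)
  simpa using this

lemma zero_mem_orderIdeal (hO : IsOrderIdeal O) : (0 : Term n) ∈ O := by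
  obtain ⟨τ, hτ⟩ := hO.1
  exact hO.2 τ hτ 0 zero_le

lemma borderClosure_subset_succ (k : ℕ) :
    borderClosure O k ⊆ borderClosure O (k + 1) :=
  Set.subset_union_left

lemma borderClosure_mono {k l : ℕ} (h : k ≤ l) :
    borderClosure O k ⊆ borderClosure O l := by
  induction l with
  | zero => obtain rfl : k = 0 := Nat.le_zero.mp h; rfl
  | succ l ih =>
    rcases Nat.lt_or_ge k (l + 1) with h' | h'
    · exact (ih (Nat.lt_succ_iff.mp h')).trans (borderClosure_subset_succ l)
    · obtain rfl : k = l + 1 := le_antisymm h h'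
      rfl

lemma add_single_mem_borderClosure {t : Term n} {k : ℕ} (ht : t ∈ borderClosure O k)
    (r : Fin (n + 1)) : t + Finsupp.single r 1 ∈ borderClosure O (k + 1) := by
  by_cases h : t + Finsupp.single r 1 ∈ borderClosure O k
  · exact Set.mem_union_left _ h
  · exact Set.mem_union_right _ ⟨h, r, t, ht, rfl⟩

lemma exists_sub_single {η : Term n} (hη : η ≠ 0) :
    ∃ (r : Fin (n + 1)) (η' : Term n), η = η' + Finsupp.single r 1
      ∧ tdeg η' + 1 = tdeg η := by
  have h1 : ∃ r, η r ≠ 0 := by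
    by_contra h
    push_neg at h
    exact hη (by ext i; simpa using h i)
  obtain ⟨r, hr⟩ := h1
  have hle : Finsupp.single r 1 ≤ η := by
    rw [Finsupp.single_le_iff]; omega
  refine ⟨r, η - Finsupp.single r 1, (tsub_add_cancel_of_le hle).symm, ?_⟩
  have := tdeg_add (η - Finsupp.single r 1) (Finsupp.single r 1)
  rw [tsub_add_cancel_of_le hle, tdeg_single] at this
  omega

lemma add_mem_borderClosure {t : Term n} {k : ℕ} (ht : t ∈ borderClosure O k)
    (η : Term n) : t + η ∈ borderClosure O (k + tdeg η) := by
  generalize hm : tdeg η = m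
  induction m generalizing η with
  | zero => obtain rfl : η = 0 := tdeg_eq_zero hm; simpa using ht
  | succ m ih =>
    have hη : η ≠ 0 := by rintro rfl; simp [tdeg] at hm
    obtain ⟨r, η', rfl, hdeg⟩ := exists_sub_single hη
    have hη' : tdeg η' = m := by omega
    have := add_single_mem_borderClosure (ih η' hη') r
    rw [← add_assoc t η']
    exact this

lemma mem_borderClosure_of_tdeg (hO : IsOrderIdeal O) {τ : Term n} {k : ℕ}
    (h : tdeg τ ≤ k) : τ ∈ borderClosure O k := by
  have h0 : (0 : Term n) ∈ borderClosure O 0 := zero_mem_orderIdeal hO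
  have := add_mem_borderClosure h0 τ
  simp only [zero_add] at this
  exact borderClosure_mono (by omega) this

lemma ind_le {τ : Term n} {k : ℕ} (h : τ ∈ borderClosure O k) : ind O τ ≤ k :=
  Nat.sInf_le h

lemma mem_borderClosure_ind (hO : IsOrderIdeal O) (τ : Term n) :
    τ ∈ borderClosure O (ind O τ) := by
  have hne : {k | τ ∈ borderClosure O k}.Nonempty :=
    ⟨tdeg τ, mem_borderClosure_of_tdeg hO le_rfl⟩
  unfold ind
  exact Nat.sInf_mem hne

lemma ind_add_le_of_mem (hτ : τ ∈ O) (η : Term n) : ind O (η + τ) ≤ tdeg η := by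
  have : τ + η ∈ borderClosure O (0 + tdeg η) :=
    add_mem_borderClosure (k := 0) hτ η
  rw [zero_add, add_comm] at this
  exact ind_le this

lemma not_mem_of_border_le (hO : IsOrderIdeal O) {σ τ : Term n} (hσ : σ ∈ border O)
    (h : σ ≤ τ) : τ ∉ O := fun hτ => hσ.1 (hO.2 τ hτ σ h)

lemma exists_border_factor (hO : IsOrderIdeal O) {k : ℕ} :
    ∀ {τ : Term n}, τ ∈ borderClosure O k → τ ∉ O →
      ∃ η σ, σ ∈ border O ∧ τ = η + σ ∧ tdeg η + 1 ≤ k := by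
  induction k with
  | zero => intro τ h h'; exact absurd h h'
  | succ k ih =>
    intro τ h h'
    rcases h with h | ⟨hτ, r, t, ht, rfl⟩
    · obtain ⟨η, σ, h1, h2, h3⟩ := ih h h'
      exact ⟨η, σ, h1, h2, by omega⟩
    · by_cases htO : t ∈ O
      · exact ⟨0, t + Finsupp.single r 1, ⟨h', r, t, htO, rfl⟩, (zero_add _).symm, by simp [tdeg]⟩
      · obtain ⟨η, σ, h1, rfl, h3⟩ := ih ht htO
        refine ⟨η + Finsupp.single r 1, σ, h1, by abel, ?_⟩
        rw [tdeg_add, tdeg_single]; omega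

lemma lab_lt_of_tdeg_lt {lab : Term n → ℕ} (hlab : DegOrderedLabeling O lab)
    {σ σ' : Term n} (hσ : σ ∈ border O) (hσ' : σ' ∈ border O)
    (h : tdeg σ < tdeg σ') : lab σ < lab σ' := by
  rcases lt_trichotomy (lab σ) (lab σ') with h' | h' | h'
  · exact h'
  · exact absurd (hlab.1 hσ hσ' h') (by rintro rfl; omega)
  · exact absurd (hlab.2 σ' hσ' σ hσ h') (by omega)

/-- Key: for `η ∈ 𝒯_σ`, `ind(η·σ) ≥ deg η + 1`. -/
lemma ind_cone_ge (hO : IsOrderIdeal O) {lab : Term n → ℕ}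
    (hlab : DegOrderedLabeling O lab) {σ η : Term n} (hσ : σ ∈ border O)
    (hη : η ∈ mulSet O lab σ) : tdeg η + 1 ≤ ind O (η + σ) := by
  by_contra hcon
  push_neg at hcon
  have hmem := mem_borderClosure_ind hO (η + σ)
  have hnotO : η + σ ∉ O := not_mem_of_border_le hO hσ le_add_self
  obtain ⟨η', σ', h1, heq, h3⟩ := exists_border_factor hO hmem hnotO
  have hdeg : tdeg η + tdeg σ = tdeg η' + tdeg σ' := by
    have := congrArg tdeg heq; rwa [tdeg_add, tdeg_add] at this
  have hlt : tdeg σ < tdeg σ' := by omega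
  exact hη σ' h1 (lab_lt_of_tdeg_lt hlab hσ h1 hlt) (heq ▸ le_add_self)

/-- Cones are disjoint. -/
lemma cone_sigma_eq {lab : Term n → ℕ} (hlab : DegOrderedLabeling O lab)
    {σ σ' η η' : Term n} (hσ : σ ∈ border O) (hσ' : σ' ∈ border O)
    (hη : η ∈ mulSet O lab σ) (hη' : η' ∈ mulSet O lab σ')
    (heq : η + σ = η' + σ') : σ = σ' := by
  by_contra hne
  rcases lt_trichotomy (lab σ) (lab σ') with h | h | h
  · exact hη σ' hσ' h (heq ▸ le_add_self)
  · exact hne (hlab.1 hσ hσ' h)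
  · exact hη' σ hσ h (heq ▸ le_add_self)

end Aux

section AuxPoly

variable {K : Type*} [Field K] {O : Set (Term n)}
  {g : Term n → MvPolynomial (Fin (n + 1)) K}

lemma reductor_eq (σ η : Term n) :
    monomial η (1 : K) * g σ
      = monomial (η + σ) (1 : K) - monomial η (1 : K) * (monomial σ (1 : K) - g σ) := by
  rw [mul_sub, monomial_mul, one_mul]
  ring

lemma coeff_reductor_self (hO : IsOrderIdeal O) (hg : IsPrebasis O g)
    {σ : Term n} (hσ : σ ∈ border O) (η : Term n) :
    coeff (η + σ) (monomial η (1 : K) * g σ) = 1 := by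
  rw [reductor_eq, coeff_sub, coeff_monomial, if_pos rfl,
    coeff_monomial_mul' (η + σ) η 1 _, if_pos le_self_add, one_mul, add_tsub_cancel_left]
  have h0 : coeff σ (monomial σ (1 : K) - g σ) = 0 := by
    by_contra h
    exact hσ.1 (hg σ hσ σ (mem_support_iff.mpr h)).1
  rw [h0, sub_zero]

lemma coeff_reductor_eq_zero (hO : IsOrderIdeal O) (hg : IsPrebasis O g)
    {σ : Term n} (hσ : σ ∈ border O) (η μ : Term n) (hne : η + σ ≠ μ)
    (h : tdeg η < ind O μ ∨ tdeg η + tdeg σ ≠ tdeg μ) :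
    coeff μ (monomial η (1 : K) * g σ) = 0 := by
  rw [reductor_eq, coeff_sub, coeff_monomial, if_neg hne,
    coeff_monomial_mul' μ η 1 _]
  split_ifs with hle
  · rw [one_mul, zero_sub, neg_eq_zero]
    by_contra hc
    obtain ⟨hmemO, hdeg⟩ := hg σ hσ (μ - η) (mem_support_iff.mpr hc)
    have hμ : μ = η + (μ - η) := (add_tsub_cancel_of_le hle).symm
    rcases h with h | h
    · have := ind_add_le_of_mem hmemO η
      rw [← hμ] at this
      omega
    · have := congrArg tdeg hμ
      rw [tdeg_add, hdeg] at this
      omega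
  · simp

end AuxPoly

/-- **Border division.** A nonzero `f ∈ ⟨𝒯G⟩` can be written as `f = Σ q_j g_{σ_j}` with
border terms `σ_j` of degree `≤ deg f` and `deg q_j ≤ ind_𝒪(f) - 1` whenever `q_j ≠ 0`. -/
theorem border_division (O : Set (Term n)) (hO : IsOrderIdeal O)
    (lab : Term n → ℕ) (hlab : DegOrderedLabeling O lab)
    (g : Term n → MvPolynomial (Fin (n + 1)) K) (hg : IsPrebasis O g)
    (f : MvPolynomial (Fin (n + 1)) K) (hf : f ≠ 0)
    (hmem : f ∈ Submodule.span K (reductors O lab g)) :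
    ∃ (s : Finset (Term n)) (q : Term n → MvPolynomial (Fin (n + 1)) K),
      (∀ σ ∈ s, σ ∈ border O ∧ tdeg σ ≤ f.totalDegree) ∧
      f = ∑ σ ∈ s, q σ * g σ ∧
      ∀ σ ∈ s, q σ ≠ 0 → (q σ).totalDegree ≤ indP O f - 1 := by
  classical
  obtain ⟨c, hsupp, hsum⟩ := Submodule.mem_span_set.mp hmem
  have H : ∀ p ∈ c.support, ∃ σ, σ ∈ border O ∧ ∃ η, η ∈ mulSet O lab σ ∧
      p = monomial η (1 : K) * g σ := fun p hp => hsupp hp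
  choose! σf hσf ηf hηf hpf using H
  set D := c.support with hD
  have hsum' : f = ∑ p ∈ D, c p • p := by rw [← hsum]; rfl
  have tdeg_eq_sum : ∀ μ : Term n, tdeg μ = μ.sum fun _ e => e := fun μ =>
    (Finset.sum_subset (Finset.subset_univ _)
      (fun i _ hi => Finsupp.notMem_support_iff.mp hi)).symm
  have key : ∀ p ∈ D, tdeg (σf p) ≤ f.totalDegree ∧ tdeg (ηf p) + 1 ≤ indP O f := by
    intro p hp
    set d := tdeg (ηf p) + tdeg (σf p) with hd
    set T := D.filter (fun q => tdeg (ηf q) + tdeg (σf q) = d) with hT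
    have hpT : p ∈ T := Finset.mem_filter.mpr ⟨hp, rfl⟩
    obtain ⟨ps, hpsT, hmax⟩ := T.exists_max_image (fun q => ind O (ηf q + σf q)) ⟨p, hpT⟩
    obtain ⟨hpsD, hpsd⟩ := Finset.mem_filter.mp hpsT
    set μ := ηf ps + σf ps with hμ
    have hμd : tdeg μ = d := by rw [hμ, tdeg_add, hpsd]
    have hterm : ∀ q ∈ D, q ≠ ps → coeff μ (c q • q) = 0 := by
      intro q hq hqne
      have hne : ηf q + σf q ≠ μ := by
        intro heq
        have hσeq : σf q = σf ps :=
          cone_sigma_eq hlab (hσf q hq) (hσf ps hpsD) (hηf q hq) (hηf ps hpsD) heq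
        have hηeq : ηf q = ηf ps := by
          rw [hσeq] at heq; exact add_right_cancel heq
        exact hqne (by rw [hpf q hq, hpf ps hpsD, hσeq, hηeq])
      have hdisj : tdeg (ηf q) < ind O μ ∨ tdeg (ηf q) + tdeg (σf q) ≠ tdeg μ := by
        by_cases hqT : q ∈ T
        · left
          have h1 := ind_cone_ge hO hlab (hσf q hq) (hηf q hq)
          have h2 := hmax q hqT
          omega
        · right
          rw [hμd]
          intro hcon
          exact hqT (Finset.mem_filter.mpr ⟨hq, hcon⟩)
      rw [coeff_smul, hpf q hq,
        coeff_reductor_eq_zero hO hg (hσf q hq) (ηf q) μ hne hdisj, smul_zero]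
    have hcoeff : coeff μ f = c ps := by
      rw [hsum', coeff_sum, Finset.sum_eq_single_of_mem ps hpsD hterm, coeff_smul,
        hpf ps hpsD, hμ, coeff_reductor_self hO hg (hσf ps hpsD), smul_eq_mul, mul_one]
    have hμsupp : μ ∈ f.support :=
      mem_support_iff.mpr (by rw [hcoeff]; exact Finsupp.mem_support_iff.mp hpsD)
    refine ⟨?_, ?_⟩
    · have h1 : tdeg μ ≤ f.totalDegree := (tdeg_eq_sum μ) ▸ le_totalDegree hμsupp
      omega
    · have h1 := ind_cone_ge hO hlab (hσf p hp) (hηf p hp)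
      have h2 := hmax p hpT
      have h3 : ind O μ ≤ indP O f := Finset.le_sup hμsupp
      omega
  refine ⟨D.image σf,
    fun σ => ∑ p ∈ D.filter (fun q => σf q = σ), c p • monomial (ηf p) (1 : K), ?_, ?_, ?_⟩
  · intro σ hσ
    obtain ⟨p, hp, rfl⟩ := Finset.mem_image.mp hσ
    exact ⟨hσf p hp, (key p hp).1⟩
  · have hfib := Finset.sum_fiberwise_of_maps_to
      (g := σf) (t := D.image σf) (fun p hp => Finset.mem_image_of_mem σf hp)
      (fun p => c p • p)
    rw [hsum', ← hfib]
    refine Finset.sum_congr rfl fun σ hσ => ?_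
    rw [Finset.sum_mul]
    refine Finset.sum_congr rfl fun p hp => ?_
    obtain ⟨hpD, hpσ⟩ := Finset.mem_filter.mp hp
    rw [smul_mul_assoc, ← hpσ, ← hpf p hpD]
  · intro σ hσ hq0
    refine (totalDegree_finset_sum _ _).trans (Finset.sup_le fun p hp => ?_)
    obtain ⟨hpD, -⟩ := Finset.mem_filter.mp hp
    have h2 := (key p hpD).2
    calc (c p • monomial (ηf p) (1 : K)).totalDegree
        ≤ (monomial (ηf p) (1 : K)).totalDegree := totalDegree_smul_le _ _
      _ ≤ (ηf p).sum fun _ => id := totalDegree_monomial_le _ _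
      _ = tdeg (ηf p) := (tdeg_eq_sum (ηf p)).symm
      _ ≤ indP O f - 1 := by omega


end Border
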